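/- Let V be an environment, A a well-typed PT-algebra, and η = (η_t, η_d) a valuation over A that is well-typed w.r.t. V. Then for every partial expression e ∈ Expr^τ_{Σ⊥}(V): ⟦e⟧^A η_d ⊆ E^A(⟦τ⟧^A η_t). -/

import Mathlib

namespace ACRWL

/-- Partial expressions: data variables, bottom, data constructor applications
and defined function applications (symbols named by natural numbers). -/
inductive Expr : Type where
  | var : ℕ → Expr
  | bot : Expr
  | con : ℕ → List Expr → Expr
  | fn  : ℕ → List Expr → Expr

namespace Expr

/-- Occurrence of a data variable in an expression. -/
inductive Occurs (x : ℕ) : Expr → Prop where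
  | var : Occurs x (var x)
  | con {c : ℕ} {es : List Expr} {e : Expr} : e ∈ es → Occurs x e → Occurs x (con c es)
  | fn {f : ℕ} {es : List Expr} {e : Expr} : e ∈ es → Occurs x e → Occurs x (fn f es)

/-- Partial data terms: built from variables, ⊥ and data constructors only. -/
inductive IsTerm : Expr → Prop where
  | var (x : ℕ) : IsTerm (var x)
  | bot : IsTerm bot
  | con {c : ℕ} {es : List Expr} : (∀ e ∈ es, IsTerm e) → IsTerm (con c es)

/-- Total expressions: no occurrence of ⊥. -/
inductive NoBot : Expr → Prop where
  | var (x : ℕ) : NoBot (var x)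
  | con {c : ℕ} {es : List Expr} : (∀ e ∈ es, NoBot e) → NoBot (con c es)
  | fn {f : ℕ} {es : List Expr} : (∀ e ∈ es, NoBot e) → NoBot (fn f es)

/-- Total data terms. -/
def IsTotalTerm (e : Expr) : Prop := IsTerm e ∧ NoBot e

/-- Application of a data substitution. -/
def subst (σ : ℕ → Expr) : Expr → Expr
  | var x => σ x
  | bot => bot
  | con c es => con c (es.attach.map fun e => subst σ e.1)
  | fn f es => fn f (es.attach.map fun e => subst σ e.1)
termination_by e => sizeOf e
decreasing_by
  all_goals (simp only [Expr.con.sizeOf_spec, Expr.fn.sizeOf_spec]; have := List.sizeOf_lt_of_mem e.2; omega)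

/-- Number of occurrences of the variable `x`. -/
def varCount (x : ℕ) : Expr → ℕ
  | var y => if y = x then 1 else 0
  | bot => 0
  | con _ es => (es.attach.map fun e => varCount x e.1).sum
  | fn _ es => (es.attach.map fun e => varCount x e.1).sum
termination_by e => sizeOf e
decreasing_by
  all_goals (simp only [Expr.con.sizeOf_spec, Expr.fn.sizeOf_spec]; have := List.sizeOf_lt_of_mem e.2; omega)

end Expr

/-- A set of equational axioms between (total data) terms. -/
abbrev Axioms := Set (Expr × Expr)

/-- A data substitution mapping every variable to a partial data term. -/
def TermSub (σ : ℕ → Expr) : Prop := ∀ x, (σ x).IsTerm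

/-- `σ` is safe for `t`: variables occurring more than once in `t`
are mapped to total data terms. -/
def SafeSub (σ : ℕ → Expr) (t : Expr) : Prop :=
  ∀ x, 2 ≤ Expr.varCount x t → Expr.IsTotalTerm (σ x)

/-- Well-formed set of equational axioms: a finite set of equations between
total data terms. -/
def WfAxioms (C : Axioms) : Prop :=
  C.Finite ∧ ∀ p ∈ C, Expr.IsTotalTerm p.1 ∧ Expr.IsTotalTerm p.2

/-- `[C]_⊒` : the instances of the axioms of `C`, read in both directions,
under safe partial data substitutions. -/
def CInstances (C : Axioms) : Set (Expr × Expr) :=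
  { q | ∃ p ∈ C, ∃ σ : ℕ → Expr, TermSub σ ∧
      ((SafeSub σ p.1 ∧ q = (p.1.subst σ, p.2.subst σ)) ∨
       (SafeSub σ p.2 ∧ q = (p.2.subst σ, p.1.subst σ))) }

/-- Every axiom is regular : both sides have the same data variables. -/
def RegularAxioms (C : Axioms) : Prop :=
  ∀ p ∈ C, ∀ x, Expr.Occurs x p.1 ↔ Expr.Occurs x p.2

/-- Every axiom is non-collapsing : neither side is a variable. -/
def NonCollapsing (C : Axioms) : Prop :=
  ∀ p ∈ C, (∀ x, p.1 ≠ Expr.var x) ∧ (∀ x, p.2 ≠ Expr.var x)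

/-- Strongly regular set of axioms. -/
def StronglyRegular (C : Axioms) : Prop := RegularAxioms C ∧ NonCollapsing C

/-- The inequational calculus associated to `C`, deriving approximation
inequalities `s ⊒ t` between partial data terms. -/
inductive Geq (C : Axioms) : Expr → Expr → Prop where
  | bot {t : Expr} : t.IsTerm → Geq C t Expr.bot
  | refl {t : Expr} : t.IsTerm → Geq C t t
  | trans {t t' t'' : Expr} : Geq C t t' → Geq C t' t'' → Geq C t t''
  | mono {c : ℕ} {ts ss : List Expr} : ts.length = ss.length →
      (∀ p ∈ ts.zip ss, Geq C p.1 p.2) → Geq C (Expr.con c ts) (Expr.con c ss)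
  | ax {s t : Expr} : (s, t) ∈ CInstances C → Geq C s t

/-- `s ≈_C t` iff `s ⊒_C t` and `t ⊒_C s`. -/
def EqC (C : Axioms) (s t : Expr) : Prop := Geq C s t ∧ Geq C t s

end ACRWL

namespace ACRWL

/-- Polymorphic types built from type variables and type constructors. -/
inductive Ty : Type where
  | tvar : ℕ → Ty
  | tcon : ℕ → List Ty → Ty

namespace Ty

/-- Occurrence of a type variable in a type. -/
inductive OccursT (α : ℕ) : Ty → Prop where
  | tvar : OccursT α (tvar α)
  | tcon {K : ℕ} {τs : List Ty} {τ : Ty} : τ ∈ τs → OccursT α τ → OccursT α (tcon K τs)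

/-- Application of a type substitution. -/
def subst (σ : ℕ → Ty) : Ty → Ty
  | tvar α => σ α
  | tcon K τs => tcon K (τs.attach.map fun τ => subst σ τ.1)
termination_by τ => sizeOf τ
decreasing_by
  all_goals (simp only [Ty.tcon.sizeOf_spec]; have := List.sizeOf_lt_of_mem τ.2; omega)

end Ty

/-- A principal type declaration `(τ₁,…,τₙ) → τ`. -/
structure Decl : Type where
  args : List Ty
  res : Ty

/-- Transparency: every type variable of the argument types occurs in the
result type. -/
def Decl.Transparent (d : Decl) : Prop :=
  ∀ α : ℕ, (∃ τ ∈ d.args, Ty.OccursT α τ) → Ty.OccursT α d.res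

/-- Instance of a declaration under a type substitution. -/
def Decl.substT (σt : ℕ → Ty) (d : Decl) : Decl :=
  ⟨d.args.map (Ty.subst σt), d.res.subst σt⟩

/-- A variant of a declaration: a renaming of its type variables. -/
def IsVariant (d d' : Decl) : Prop :=
  ∃ ρ : ℕ → ℕ, Function.Injective ρ ∧ d' = d.substT (fun α => Ty.tvar (ρ α))

/-- A polymorphic signature: (optional) principal type declarations for data
constructors and for defined function symbols, the former transparent. -/
structure Signature : Type where
  dc : ℕ → Option Decl
  fs : ℕ → Option Decl
  dc_trans : ∀ c d, dc c = some d → Decl.Transparent d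

/-- An environment: at most one type annotation per data variable. -/
abbrev Env := ℕ → Option Ty

/-- Instance of an environment under a type substitution. -/
def Env.substT (V : Env) (σt : ℕ → Ty) : Env := fun x => (V x).map (Ty.subst σt)

/-- The type inference system: `HasType Sg V e τ` is the judgement
`V ⊢_{Σ⊥} e : τ`.  The symbol `⊥` has principal type `⊥ : → α`, hence
every type is an admissible instance for it. -/
inductive HasType (Sg : Signature) (V : Env) : Expr → Ty → Prop where
  | var {x : ℕ} {τ : Ty} : V x = some τ → HasType Sg V (Expr.var x) τ
  | bot (τ : Ty) : HasType Sg V Expr.bot τ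
  | con {c : ℕ} {es : List Expr} {d : Decl} {σt : ℕ → Ty} :
      Sg.dc c = some d → es.length = d.args.length →
      (∀ p ∈ es.zip d.args, HasType Sg V p.1 (Ty.subst σt p.2)) →
      HasType Sg V (Expr.con c es) (Ty.subst σt d.res)
  | fn {f : ℕ} {es : List Expr} {d : Decl} {σt : ℕ → Ty} :
      Sg.fs f = some d → es.length = d.args.length →
      (∀ p ∈ es.zip d.args, HasType Sg V p.1 (Ty.subst σt p.2)) →
      HasType Sg V (Expr.fn f es) (Ty.subst σt d.res)

/-- Occurrence of a function symbol in an expression. -/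
inductive FnOccurs (f : ℕ) : Expr → Prop where
  | head {es : List Expr} : FnOccurs f (Expr.fn f es)
  | con {c : ℕ} {es : List Expr} {e : Expr} : e ∈ es → FnOccurs f e → FnOccurs f (Expr.con c es)
  | fn {g : ℕ} {es : List Expr} {e : Expr} : e ∈ es → FnOccurs f e → FnOccurs f (Expr.fn g es)

end ACRWL

namespace ACRWL

/-- A Polymorphically Typed algebra (PT-algebra) over a signature: a poset
data universe with bottom, a type universe, a membership relation whose type
extensions are cones, operations interpreting type constructors, data
constructors (deterministic, valued in principal ideals — represented here by
their generators — monotonic and preserving maximal elements) and defined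
function symbols (non-deterministic: monotonic and cone-valued). -/
structure PTAlgebra (Sg : Signature) : Type 1 where
  D : Type
  le : D → D → Prop
  le_refl : ∀ u, le u u
  le_trans : ∀ u v w, le u v → le v w → le u w
  le_antisymm : ∀ u v, le u v → le v u → u = v
  bot : D
  bot_le : ∀ u, le bot u
  T : Type
  mem : D → T → Prop
  mem_bot : ∀ ℓ, mem bot ℓ
  mem_down : ∀ u v ℓ, le u v → mem v ℓ → mem u ℓ
  tcApp : ℕ → List T → T
  conApp : ℕ → List D → D
  conApp_mono : ∀ (c : ℕ) (us vs : List D), us.length = vs.length →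
      (∀ p ∈ us.zip vs, le p.1 p.2) → le (conApp c us) (conApp c vs)
  conApp_max : ∀ (c : ℕ) (us : List D), (∀ u ∈ us, ∀ v, le u v → v = u) →
      ∀ v, le (conApp c us) v → v = conApp c us
  fnApp : ℕ → List D → Set D
  fnApp_bot : ∀ f us, bot ∈ fnApp f us
  fnApp_down : ∀ f us u v, le u v → v ∈ fnApp f us → u ∈ fnApp f us
  fnApp_mono : ∀ (f : ℕ) (us vs : List D), us.length = vs.length →
      (∀ p ∈ us.zip vs, le p.1 p.2) → fnApp f us ⊆ fnApp f vs

/-- A maximal (totally defined) element of the data universe. -/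
def PTAlgebra.Max {Sg : Signature} (A : PTAlgebra Sg) (u : A.D) : Prop :=
  ∀ v, A.le u v → v = u

/-- Denotation of polymorphic types under a type valuation. -/
def tden {Sg : Signature} (A : PTAlgebra Sg) (ηt : ℕ → A.T) : Ty → A.T
  | Ty.tvar α => ηt α
  | Ty.tcon K τs => A.tcApp K (τs.attach.map fun τ => tden A ηt τ.1)
termination_by τ => sizeOf τ
decreasing_by
  all_goals (simp only [Ty.tcon.sizeOf_spec]; have := List.sizeOf_lt_of_mem τ.2; omega)

/-- Denotation of partial expressions under a data valuation:
`Den A ηd e u` means `u ∈ ⟦e⟧^A ηd`, where `⟦⊥⟧ = {⊥}`, `⟦x⟧ = ⟨ηd x⟩`,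
and applications denote the extension of the interpreting operation to cones. -/
inductive Den {Sg : Signature} (A : PTAlgebra Sg) (ηd : ℕ → A.D) : Expr → A.D → Prop where
  | bot : Den A ηd Expr.bot A.bot
  | var {x : ℕ} {u : A.D} : A.le u (ηd x) → Den A ηd (Expr.var x) u
  | con {c : ℕ} {es : List Expr} {vs : List A.D} {u : A.D} :
      es.length = vs.length →
      (∀ p ∈ es.zip vs, Den A ηd p.1 p.2) →
      A.le u (A.conApp c vs) → Den A ηd (Expr.con c es) u
  | fn {f : ℕ} {es : List Expr} {vs : List A.D} {u : A.D} :
      es.length = vs.length →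
      (∀ p ∈ es.zip vs, Den A ηd p.1 p.2) →
      u ∈ A.fnApp f vs → Den A ηd (Expr.fn f es) u

/-- A well-typed PT-algebra: the operations interpreting the declared symbols
respect the (instances of) their declared principal types. -/
def PTAlgebra.WellTyped {Sg : Signature} (A : PTAlgebra Sg) : Prop :=
  (∀ (c : ℕ) (D : Decl), Sg.dc c = some D → ∀ (ηt : ℕ → A.T) (vs : List A.D),
      vs.length = D.args.length →
      (∀ p ∈ vs.zip D.args, A.mem p.1 (tden A ηt p.2)) →
      ∀ u, A.le u (A.conApp c vs) → A.mem u (tden A ηt D.res)) ∧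
  (∀ (f : ℕ) (D : Decl), Sg.fs f = some D → ∀ (ηt : ℕ → A.T) (vs : List A.D),
      vs.length = D.args.length →
      (∀ p ∈ vs.zip D.args, A.mem p.1 (tden A ηt p.2)) →
      ∀ u ∈ A.fnApp f vs, A.mem u (tden A ηt D.res))

/-- A valuation well-typed w.r.t. an environment. -/
def WellTypedVal {Sg : Signature} (A : PTAlgebra Sg) (V : Env)
    (ηt : ℕ → A.T) (ηd : ℕ → A.D) : Prop :=
  ∀ x τ, V x = some τ → A.mem (ηd x) (tden A ηt τ)

end ACRWL

namespace ACRWL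

/-- Proposition 5.3: if `A` is a well-typed PT-algebra and `η = (ηt, ηd)` is
a valuation well-typed w.r.t. the environment `V`, then for every
`e ∈ Expr^τ_{Σ⊥}(V)` we have `⟦e⟧^A ηd ⊆ E^A(⟦τ⟧^A ηt)`. -/
theorem subst_tcon (σt : ℕ → Ty) (K : ℕ) (τs : List Ty) :
    Ty.subst σt (Ty.tcon K τs) = Ty.tcon K (τs.map (Ty.subst σt)) := by
  rw [Ty.subst]
  exact congrArg _ (List.attach_map_val (l := τs) (f := Ty.subst σt))

theorem tden_tcon {Sg : Signature} (A : PTAlgebra Sg) (ηt : ℕ → A.T)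
    (K : ℕ) (τs : List Ty) :
    tden A ηt (Ty.tcon K τs) = A.tcApp K (τs.map (tden A ηt)) := by
  rw [tden]
  exact congrArg _ (List.attach_map_val (l := τs) (f := tden A ηt))

theorem tden_subst {Sg : Signature} (A : PTAlgebra Sg) (ηt : ℕ → A.T)
    (σt : ℕ → Ty) : ∀ τ : Ty,
    tden A ηt (Ty.subst σt τ) = tden A (fun α => tden A ηt (σt α)) τ := by
  intro τ
  induction τ using Ty.subst.induct with
  | case1 α => simp [Ty.subst, tden]
  | case2 K τs ih =>
    rw [subst_tcon, tden_tcon, tden_tcon, List.map_map]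
    congr 1
    apply List.map_congr_left
    intro τ hτ
    exact ih ⟨τ, hτ⟩

theorem den_subset_extension (Sg : Signature) (A : PTAlgebra Sg)
    (V : Env) (ηt : ℕ → A.T) (ηd : ℕ → A.D)
    (hA : A.WellTyped) (hη : WellTypedVal A V ηt ηd)
    (e : Expr) (τ : Ty) (ht : HasType Sg V e τ) :
    ∀ u : A.D, Den A ηd e u → A.mem u (tden A ηt τ) := by
  induction ht with
  | var hV =>
    intro u hu
    cases hu with
    | var hle => exact A.mem_down _ _ _ hle (hη _ _ hV)
  | bot τ =>
    intro u hu
    cases hu with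
    | bot => exact A.mem_bot _
  | @con c es d σt hdc hlen _ ih =>
    intro u hu
    cases hu with
    | @con _ _ vs _ hlen' hden hle =>
      rw [tden_subst]
      refine hA.1 c d hdc _ vs (by omega) ?_ u hle
      intro p hp
      obtain ⟨i, hi, rfl⟩ := List.mem_iff_getElem.mp hp
      rw [List.getElem_zip]
      rw [← tden_subst]
      have hies : i < es.length := by
        simp [List.length_zip] at hi; omega
      refine ih (es[i], d.args[i]'(by omega)) ?_ vs[i] ?_
      · exact List.mem_iff_getElem.mpr ⟨i, by simp [List.length_zip]; omega,
          by rw [List.getElem_zip]⟩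
      · have := hden ((es.zip vs)[i]'(by simp [List.length_zip]; omega))
          (List.getElem_mem _)
        rwa [List.getElem_zip] at this
  | @fn f es d σt hfs hlen _ ih =>
    intro u hu
    cases hu with
    | @fn _ _ vs _ hlen' hden hmem =>
      rw [tden_subst]
      refine hA.2 f d hfs _ vs (by omega) ?_ u hmem
      intro p hp
      obtain ⟨i, hi, rfl⟩ := List.mem_iff_getElem.mp hp
      rw [List.getElem_zip]
      rw [← tden_subst]
      have hies : i < es.length := by
        simp [List.length_zip] at hi; omega
      refine ih (es[i], d.args[i]'(by omega)) ?_ vs[i] ?_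
      · exact List.mem_iff_getElem.mpr ⟨i, by simp [List.length_zip]; omega,
          by rw [List.getElem_zip]⟩
      · have := hden ((es.zip vs)[i]'(by simp [List.length_zip]; omega))
          (List.getElem_mem _)
        rwa [List.getElem_zip] at this

end ACRWL
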